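/- For every Borel set C ⊂ 𝒯 and every δ ∈ ℝ, the set (C × {x ∈ X : φ(x) = δ}) ∩ Γ is d²-cyclically monotone. -/
import Mathlib


open Set MeasureTheory

variable {X : Type*}

/-- A geodesic parametrized on `[0,1]`. -/
def IsGeodesic [MetricSpace X] (γ : ℝ → X) : Prop :=
  ∀ s ∈ Set.Icc (0:ℝ) 1, ∀ t ∈ Set.Icc (0:ℝ) 1,
    dist (γ s) (γ t) = |s - t| * dist (γ 0) (γ 1)

/-- `(X,d)` is a geodesic space. -/
def GeodesicSpace (X : Type*) [MetricSpace X] : Prop :=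
  ∀ x y : X, ∃ γ : ℝ → X, IsGeodesic γ ∧ γ 0 = x ∧ γ 1 = y

/-- `Γ = {(x,y) : φ(x) - φ(y) = d(x,y)}`. -/
def Gamma [MetricSpace X] (φ : X → ℝ) : Set (X × X) :=
  {p | φ p.1 - φ p.2 = dist p.1 p.2}

/-- `Γ⁻¹`. -/
def GammaInv [MetricSpace X] (φ : X → ℝ) : Set (X × X) :=
  {p | (p.2, p.1) ∈ Gamma φ}

/-- The set of transport rays `R = Γ ∪ Γ⁻¹`. -/
def Rays [MetricSpace X] (φ : X → ℝ) : Set (X × X) :=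
  Gamma φ ∪ GammaInv φ

/-- `Γ(x)`. -/
def GammaOf [MetricSpace X] (φ : X → ℝ) (x : X) : Set X := {y | (x, y) ∈ Gamma φ}

/-- `Γ⁻¹(x)`. -/
def GammaInvOf [MetricSpace X] (φ : X → ℝ) (x : X) : Set X := {y | (x, y) ∈ GammaInv φ}

/-- `R(x) = Γ(x) ∪ Γ⁻¹(x)`. -/
def RayOf [MetricSpace X] (φ : X → ℝ) (x : X) : Set X := GammaOf φ x ∪ GammaInvOf φ x

/-- The transport set with end points `𝒯_e`. -/
def Te [MetricSpace X] (φ : X → ℝ) : Set X :=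
  (Prod.fst '' (Gamma φ \ {p : X × X | p.1 = p.2})) ∪
    (Prod.fst '' (GammaInv φ \ {p : X × X | p.1 = p.2}))

/-- The set of forward branching points `A₊`. -/
def Aplus [MetricSpace X] (φ : X → ℝ) : Set X :=
  {x | x ∈ Te φ ∧ ∃ z ∈ GammaOf φ x, ∃ w ∈ GammaOf φ x, (z, w) ∉ Rays φ}

/-- The set of backward branching points `A₋`. -/
def Aminus [MetricSpace X] (φ : X → ℝ) : Set X :=
  {x | x ∈ Te φ ∧ ∃ z ∈ GammaInvOf φ x, ∃ w ∈ GammaInvOf φ x, (z, w) ∉ Rays φ}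

/-- The transport set `𝒯 = 𝒯_e \ (A₊ ∪ A₋)`. -/
def Tset [MetricSpace X] (φ : X → ℝ) : Set X := Te φ \ (Aplus φ ∪ Aminus φ)

/-- `d²`-cyclical monotonicity. -/
def CyclMono2 [MetricSpace X] (Λ : Set (X × X)) : Prop :=
  ∀ (n : ℕ) (p : Fin (n + 1) → X × X), (∀ i, p i ∈ Λ) →
    ∑ i, dist (p i).1 (p i).2 ^ 2 ≤ ∑ i, dist (p i).1 (p (i + 1)).2 ^ 2

theorem stmt17 [MetricSpace X] [MeasurableSpace X] [BorelSpace X]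
    (hproper : ProperSpace X) (hgeod : GeodesicSpace X)
    (φ : X → ℝ) (hφ : LipschitzWith 1 φ)
    (C : Set X) (hC : MeasurableSet C) (hCT : C ⊆ Tset φ) (δ : ℝ) :
    CyclMono2 ((C ×ˢ {x : X | φ x = δ}) ∩ Gamma φ) := by
  intro n p hp
  apply Finset.sum_le_sum
  intro i _
  obtain ⟨⟨-, hδi⟩, hΓi⟩ := hp i
  obtain ⟨⟨-, hδi1⟩, -⟩ := hp (i + 1)
  have hlip : φ (p i).1 - φ (p (i+1)).2 ≤ dist (p i).1 (p (i+1)).2 := by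
    have h := hφ.dist_le_mul (p i).1 (p (i+1)).2
    rw [Real.dist_eq] at h
    calc φ (p i).1 - φ (p (i+1)).2 ≤ |φ (p i).1 - φ (p (i+1)).2| := le_abs_self _
      _ ≤ dist (p i).1 (p (i+1)).2 := by simpa using h
  have h1 : dist (p i).1 (p i).2 ≤ dist (p i).1 (p (i+1)).2 := by
    rw [← hΓi]
    simp only [Set.mem_setOf_eq] at hδi hδi1
    rw [hδi, ← hδi1]
    exact hlip
  exact pow_le_pow_left₀ dist_nonneg h1 2
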